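/- Suppose additionally that U'(x) → ∞ as x → x_U⁻. Define, for w ∈ (w_c, x_V/x_U), θ(w) = w·U(x₁(w))·V'(w·x₁(w)) / ( U'(x₁(w))·V(w·x₁(w)) + w·U(x₁(w))·V'(w·x₁(w)) ). Then θ(w) → 0 as w → w_c from the right; i.e., the phase transition at w_c is continuous. -/

import Mathlib

open Filter Topology Set

lemma aux_summable_mono {b : ℕ → ℝ} (hb : ∀ n, 0 ≤ b n) {x y : ℝ} (hx : 0 ≤ x) (hxy : x ≤ y)
    (hy : Summable fun n => b n * y ^ n) : Summable fun n => b n * x ^ n :=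
  hy.of_nonneg_of_le (fun n => mul_nonneg (hb n) (pow_nonneg hx n))
    (fun n => mul_le_mul_of_nonneg_left (pow_le_pow_left₀ hx hxy n) (hb n))

lemma aux_tsum_mono {b : ℕ → ℝ} (hb : ∀ n, 0 ≤ b n) {x y : ℝ} (hx : 0 ≤ x) (hxy : x ≤ y)
    (hy : Summable fun n => b n * y ^ n) :
    (∑' n, b n * x ^ n) ≤ ∑' n, b n * y ^ n :=
  Summable.tsum_le_tsum (fun n => mul_le_mul_of_nonneg_left (pow_le_pow_left₀ hx hxy n) (hb n))
    (aux_summable_mono hb hx hxy hy) hy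

lemma aux_tsum_strict {b : ℕ → ℝ} (hb : ∀ n, 0 ≤ b n) {N : ℕ} (hN : 1 ≤ N) (hbN : 0 < b N)
    {x y : ℝ} (hx : 0 ≤ x) (hxy : x < y)
    (hy : Summable fun n => b n * y ^ n) :
    (∑' n, b n * x ^ n) < ∑' n, b n * y ^ n :=
  Summable.tsum_lt_tsum (fun n => mul_le_mul_of_nonneg_left (pow_le_pow_left₀ hx hxy.le n) (hb n))
    (mul_lt_mul_of_pos_left (pow_lt_pow_left₀ hxy hx (by omega)) hbN)
    (aux_summable_mono hb hx hxy.le hy) hy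

lemma aux_analyticAt (b : ℕ → ℝ) (hb : ∀ n, 0 ≤ b n) {xV t : ℝ}
    (hVconv : ∀ x : ℝ, 0 ≤ x → x < xV → Summable fun n => b n * x ^ n)
    (ht : |t| < xV) :
    AnalyticAt ℝ (fun x : ℝ => ∑' n, b n * x ^ n) t ∧
      AnalyticAt ℝ (deriv fun x : ℝ => ∑' n, b n * x ^ n) t := by
  set P := FormalMultilinearSeries.ofScalars ℝ b with hP
  set y : ℝ := (|t| + xV) / 2 with hy
  have hy0 : 0 ≤ y := by have := abs_nonneg t; rw [hy]; linarith
  have hty : |t| < y := by rw [hy]; linarith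
  have hyV : y < xV := by rw [hy]; linarith [abs_nonneg t]
  set r : NNReal := ⟨y, hy0⟩ with hr
  have hsum : Summable fun n => ‖P n‖ * (r : ℝ) ^ n := by
    have heq : (fun n => ‖P n‖ * (r : ℝ) ^ n) = fun n => b n * y ^ n := by
      funext n
      rw [hP, FormalMultilinearSeries.ofScalars_norm, Real.norm_eq_abs, abs_of_nonneg (hb n)]; rfl
    rw [heq]
    exact hVconv y hy0 hyV
  have hrad : (r : ENNReal) ≤ P.radius := P.le_radius_of_summable hsum
  have hrad0 : 0 < P.radius := lt_of_lt_of_le (by exact_mod_cast lt_of_le_of_lt (abs_nonneg t) hty) hrad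
  have hball := (P.hasFPowerSeriesOnBall hrad0).analyticOnNhd
  have htmem : t ∈ Metric.eball (0 : ℝ) P.radius := by
    rw [Metric.mem_eball, edist_dist, dist_zero_right, Real.norm_eq_abs]
    refine lt_of_lt_of_le ?_ hrad
    rw [ENNReal.ofReal_lt_coe_iff (abs_nonneg t)]
    exact hty
  have hPsum : P.sum = fun x : ℝ => ∑' n, b n * x ^ n := by
    have : P.sum = FormalMultilinearSeries.ofScalarsSum b := rfl
    rw [this, FormalMultilinearSeries.ofScalarsSum_eq_tsum]
    simp [smul_eq_mul]
  constructor
  · rw [← hPsum]; exact hball t htmem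
  · rw [← hPsum]; exact hball.deriv t htmem


/-- If additionally U'(x) → ∞ as x → x_U⁻, then the fraction of shared
bonds θ(w) = w·U·V'/(U'·V + w·U·V') (evaluated along x₁(w)) tends to 0 as w → w_c⁺:
the phase transition at w_c is continuous. -/
theorem stmt_9
    (p b : ℕ → ℝ)
    (hp : ∀ n, 0 ≤ p n) (hp0 : p 0 = 0)
    (hb : ∀ n, 0 ≤ b n) (hb0 : 0 < b 0)
    (hpN : ∃ N, 1 ≤ N ∧ 0 < p N) (hbM : ∃ M, 1 ≤ M ∧ 0 < b M)
    (U V : ℝ → ℝ)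
    (hU : ∀ x, U x = ∑' n, p n * x ^ n)
    (hV : ∀ x, V x = ∑' n, b n * x ^ n)
    (xU xV : ℝ) (hxU0 : 0 < xU) (hxUV : xU < xV) (hxV1 : xV ≤ 1)
    (hUconv : ∀ x : ℝ, 0 ≤ x → x < xU → Summable fun n => p n * x ^ n)
    (hUdiv : ∀ x : ℝ, xU < x → ¬ Summable fun n => p n * x ^ n)
    (hVconv : ∀ x : ℝ, 0 ≤ x → x < xV → Summable fun n => b n * x ^ n)
    (hVdiv : ∀ x : ℝ, xV < x → ¬ Summable fun n => b n * x ^ n)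
    (hVinf : Filter.Tendsto V (𝓝[<] xV) Filter.atTop)
    (L : ℝ) (hL : Filter.Tendsto U (𝓝[<] xU) (𝓝 L))
    (hsub : L * V xU < 1)
    (wc : ℝ) (hwc : wc ∈ Set.Ioo 1 (xV / xU)) (hwceq : L * V (wc * xU) = 1)
    (x₁ : ℝ → ℝ)
    (hx₁ : ∀ w ∈ Set.Ioo wc (xV / xU),
      x₁ w ∈ Set.Ioo 0 xU ∧ U (x₁ w) * V (w * x₁ w) = 1)
    (hx₁uniq : ∀ w ∈ Set.Ioo wc (xV / xU), ∀ x ∈ Set.Ioo 0 xU,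
      U x * V (w * x) = 1 → x = x₁ w)
    (hU'inf : Filter.Tendsto (deriv U) (𝓝[<] xU) Filter.atTop) :
    Filter.Tendsto
      (fun w => w * U (x₁ w) * deriv V (w * x₁ w) /
        (deriv U (x₁ w) * V (w * x₁ w) + w * U (x₁ w) * deriv V (w * x₁ w)))
      (𝓝[>] wc) (𝓝 0) := by
  obtain ⟨N, hN1, hpN'⟩ := hpN
  obtain ⟨hwc1, hwc2⟩ := hwc
  have hwc0 : (0:ℝ) < wc := lt_trans one_pos hwc1
  have hwcxU : wc * xU < xV := (lt_div_iff₀ hxU0).1 hwc2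
  have hVfun : V = fun x => ∑' n, b n * x ^ n := funext hV
  have hVana : ∀ t : ℝ, 0 ≤ t → t < xV →
      AnalyticAt ℝ V t ∧ AnalyticAt ℝ (deriv V) t := by
    intro t ht0 ht
    have := aux_analyticAt b hb hVconv (t := t) (by rwa [abs_of_nonneg ht0])
    rw [hVfun]
    exact this
  have hVpos : ∀ t : ℝ, 0 ≤ t → t < xV → 0 < V t := by
    intro t ht0 ht
    rw [hV]
    calc (0:ℝ) < b 0 := hb0
      _ = b 0 * t ^ 0 := by simp
      _ ≤ ∑' n, b n * t ^ n :=
        Summable.le_tsum (hVconv t ht0 ht) 0 (fun n _ => mul_nonneg (hb n) (pow_nonneg ht0 n))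
  have hUnonneg : ∀ t : ℝ, 0 ≤ t → t < xU → 0 ≤ U t := by
    intro t ht0 ht
    rw [hU]
    exact tsum_nonneg fun n => mul_nonneg (hp n) (pow_nonneg ht0 n)
  have hUleL : ∀ t : ℝ, 0 ≤ t → t < xU → U t ≤ L := by
    intro t ht0 ht
    refine ge_of_tendsto hL ?_
    filter_upwards [Ioo_mem_nhdsLT_of_mem (show xU ∈ Ioc t xU from ⟨ht, le_rfl⟩)] with z hz
    rw [hU, hU]
    exact aux_tsum_mono hp ht0 hz.1.le (hUconv z (le_trans ht0 hz.1.le) hz.2)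
  have hUltL : ∀ t : ℝ, 0 ≤ t → t < xU → U t < L := by
    intro t ht0 ht
    have hz : t < (t + xU)/2 := by linarith
    have hz2 : (t + xU)/2 < xU := by linarith
    calc U t < U ((t+xU)/2) := by
          rw [hU, hU]
          exact aux_tsum_strict hp hN1 hpN' ht0 hz (hUconv _ (by linarith) hz2)
      _ ≤ L := hUleL _ (by linarith) hz2
  have hL0 : 0 < L := lt_of_le_of_lt (hUnonneg 0 le_rfl hxU0) (hUltL 0 le_rfl hxU0)
  have hmemIoo : ∀ᶠ w in 𝓝[>] wc, w ∈ Ioo wc (xV/xU) :=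
    Ioo_mem_nhdsGT_of_mem ⟨le_rfl, hwc2⟩
  have hx₁lt : ∀ᶠ w in 𝓝[>] wc, x₁ w < xU := by
    filter_upwards [hmemIoo] with w hw
    exact (hx₁ w hw).1.2
  have key : ∀ a : ℝ, a < xU → ∀ᶠ w in 𝓝[>] wc, a < x₁ w := by
    intro a ha
    set x₀ : ℝ := max a (xU/2) with hx₀
    have hx₀pos : 0 < x₀ := lt_of_lt_of_le (by linarith) (le_max_right _ _)
    have hx₀lt : x₀ < xU := max_lt ha (by linarith)
    have hwcx₀ : wc * x₀ < xV := by nlinarith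
    have hcont : ContinuousAt (fun w : ℝ => U x₀ * V (w * x₀)) wc := by
      have h1 : ContinuousAt V (wc * x₀) := ((hVana _ (by positivity) hwcx₀).1).continuousAt
      have h2 : ContinuousAt (fun w : ℝ => V (w * x₀)) wc := by
        have := ContinuousAt.comp (f := fun w : ℝ => w * x₀) (x := wc) h1
          ((continuous_mul_right x₀).continuousAt)
        exact this
      exact continuousAt_const.mul h2
    have hval : U x₀ * V (wc * x₀) < 1 := by
      calc U x₀ * V (wc * x₀) < L * V (wc * x₀) :=
            mul_lt_mul_of_pos_right (hUltL _ hx₀pos.le hx₀lt) (hVpos _ (by positivity) hwcx₀)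
        _ ≤ L * V (wc * xU) := by
            refine mul_le_mul_of_nonneg_left ?_ hL0.le
            rw [hV, hV]
            exact aux_tsum_mono hb (by positivity) (by nlinarith) (hVconv _ (by positivity) hwcxU)
        _ = 1 := hwceq
    have hev : ∀ᶠ w in 𝓝[>] wc, U x₀ * V (w * x₀) < 1 :=
      (hcont.tendsto.mono_left nhdsWithin_le_nhds).eventually_lt_const hval
    filter_upwards [hmemIoo, hev] with w hw hlt
    by_contra hcon
    push_neg at hcon
    obtain ⟨⟨hx₁pos, hx₁xU⟩, heq⟩ := hx₁ w hw
    have hle : x₁ w ≤ x₀ := le_trans hcon (le_max_left _ _)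
    have hw0 : 0 < w := lt_trans hwc0 hw.1
    have hwxV : w * xU < xV := (lt_div_iff₀ hxU0).1 hw.2
    have hwx₀ : w * x₀ < xV := by nlinarith
    have hchain : U (x₁ w) * V (w * x₁ w) ≤ U x₀ * V (w * x₀) := by
      refine mul_le_mul ?_ ?_ (hVpos _ (by positivity) ?_).le (hUnonneg _ hx₀pos.le hx₀lt)
      · rw [hU, hU]
        exact aux_tsum_mono hp hx₁pos.le hle (hUconv _ hx₀pos.le hx₀lt)
      · rw [hV, hV]
        refine aux_tsum_mono hb (by positivity) ?_ (hVconv _ (by positivity) hwx₀)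
        nlinarith
      · nlinarith
    rw [heq] at hchain
    linarith
  have hx₁tendsto : Tendsto x₁ (𝓝[>] wc) (𝓝[<] xU) := by
    rw [tendsto_nhdsWithin_iff]
    constructor
    · rw [tendsto_order]
      refine ⟨fun a ha => key a ha, fun a ha => ?_⟩
      filter_upwards [hx₁lt] with w h using lt_trans h ha
    · filter_upwards [hx₁lt] with w h using h
  have hwtend : Tendsto (fun w : ℝ => w) (𝓝[>] wc) (𝓝 wc) :=
    tendsto_id.mono_right nhdsWithin_le_nhds
  have hx₁n : Tendsto x₁ (𝓝[>] wc) (𝓝 xU) := hx₁tendsto.mono_right nhdsWithin_le_nhds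
  have hwx : Tendsto (fun w => w * x₁ w) (𝓝[>] wc) (𝓝 (wc * xU)) := hwtend.mul hx₁n
  have hUx₁ : Tendsto (fun w => U (x₁ w)) (𝓝[>] wc) (𝓝 L) := hL.comp hx₁tendsto
  have hU'x₁ : Tendsto (fun w => deriv U (x₁ w)) (𝓝[>] wc) atTop := hU'inf.comp hx₁tendsto
  have hana := hVana (wc * xU) (by positivity) hwcxU
  have hVwx : Tendsto (fun w => V (w * x₁ w)) (𝓝[>] wc) (𝓝 (V (wc * xU))) :=
    hana.1.continuousAt.tendsto.comp hwx
  have hV'wx : Tendsto (fun w => deriv V (w * x₁ w)) (𝓝[>] wc) (𝓝 (deriv V (wc * xU))) :=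
    hana.2.continuousAt.tendsto.comp hwx
  have hA : Tendsto (fun w => w * U (x₁ w) * deriv V (w * x₁ w)) (𝓝[>] wc)
      (𝓝 (wc * L * deriv V (wc * xU))) := (hwtend.mul hUx₁).mul hV'wx
  have hVval : 0 < V (wc * xU) := hVpos _ (by positivity) hwcxU
  have hB : Tendsto (fun w => deriv U (x₁ w) * V (w * x₁ w)) (𝓝[>] wc) atTop :=
    hU'x₁.atTop_mul_pos hVval hVwx
  have hBA : Tendsto (fun w => deriv U (x₁ w) * V (w * x₁ w) +
      w * U (x₁ w) * deriv V (w * x₁ w)) (𝓝[>] wc) atTop := hB.atTop_add hA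
  have hinv : Tendsto (fun w => (deriv U (x₁ w) * V (w * x₁ w) +
      w * U (x₁ w) * deriv V (w * x₁ w))⁻¹) (𝓝[>] wc) (𝓝 0) := hBA.inv_tendsto_atTop
  have hfin := hA.mul hinv
  rw [mul_zero] at hfin
  simpa [div_eq_mul_inv] using hfin
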